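/- Let X be a finite set with weight m, and let H be a selfadjoint operator on ℓ²(X,m). Then H is diagonally dominant if and only if H satisfies the maximum principle: Hf(x) ≥ 0 whenever f(x) = ‖f‖_∞. -/
import Mathlib

lemma sign_abs_le_one (r : ℝ) : |Real.sign r| ≤ 1 := by
  rcases lt_trichotomy r 0 with h | h | h
  · simp [Real.sign_of_neg h]
  · simp [h]
  · simp [Real.sign_of_pos h]

lemma mul_neg_sign (r : ℝ) : r * (-Real.sign r) = -|r| := by
  rcases lt_trichotomy r 0 with h | h | h
  · simp [Real.sign_of_neg h, abs_of_neg h]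
  · simp [h]
  · simp [Real.sign_of_pos h, abs_of_pos h]

/-- A selfadjoint operator `H` on `ℓ²(X,m)` is diagonally dominant if and
only if it satisfies the maximum principle: `Hf(x) ≥ 0` whenever `f(x) = ‖f‖_∞`. -/
theorem stmt_3 {X : Type*} [Fintype X] [DecidableEq X] [Nonempty X]
    (m : X → ℝ) (hm : ∀ x, 0 < m x)
    (H : Matrix X X ℝ)
    (hsa : ∀ x y, m x * H x y = m y * H y x) :
    (∀ x, ∑ y ∈ Finset.univ.erase x, |H x y| ≤ H x x) ↔
      (∀ f : X → ℝ, ∀ x, f x = ‖f‖ → 0 ≤ H.mulVec f x) := by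
  constructor
  · intro hd f x hf
    have hfx0 : 0 ≤ f x := hf ▸ norm_nonneg f
    have hy : ∀ y, |f y| ≤ f x := fun y => by
      rw [hf, ← Real.norm_eq_abs]; exact norm_le_pi_norm f y
    have hmv : H.mulVec f x = ∑ y, H x y * f y := by
      simp [Matrix.mulVec, dotProduct]
    rw [hmv, ← Finset.add_sum_erase Finset.univ _ (Finset.mem_univ x)]
    have h3 : ∑ y ∈ Finset.univ.erase x, -(|H x y| * f x)
        ≤ ∑ y ∈ Finset.univ.erase x, H x y * f y := by
      apply Finset.sum_le_sum
      intro y _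
      have h2 : |H x y * f y| ≤ |H x y| * f x := by
        rw [abs_mul]; exact mul_le_mul_of_nonneg_left (hy y) (abs_nonneg _)
      linarith [neg_abs_le (H x y * f y)]
    have h4 : ∑ y ∈ Finset.univ.erase x, -(|H x y| * f x)
        = -((∑ y ∈ Finset.univ.erase x, |H x y|) * f x) := by
      rw [Finset.sum_mul]; simp
    have h5 : (∑ y ∈ Finset.univ.erase x, |H x y|) * f x ≤ H x x * f x :=
      mul_le_mul_of_nonneg_right (hd x) hfx0
    rw [h4] at h3
    linarith
  · intro hmax x
    set f : X → ℝ := fun y => if y = x then 1 else -Real.sign (H x y) with hfdef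
    have hb : ∀ y, |f y| ≤ 1 := by
      intro y
      by_cases h : y = x
      · simp [hfdef, h]
      · simp only [hfdef, if_neg h, abs_neg]
        exact sign_abs_le_one _
    have hfx1 : f x = 1 := by simp [hfdef]
    have hfx : f x = ‖f‖ := by
      have h1 : ‖f‖ ≤ 1 := by
        apply pi_norm_le_iff_of_nonneg zero_le_one |>.mpr
        intro y; rw [Real.norm_eq_abs]; exact hb y
      have h2 : (1 : ℝ) ≤ ‖f‖ := by
        calc (1 : ℝ) = |f x| := by rw [hfx1]; simp
        _ = ‖f x‖ := (Real.norm_eq_abs _).symm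
        _ ≤ ‖f‖ := norm_le_pi_norm f x
      rw [hfx1]; linarith
    have hmv : H.mulVec f x = ∑ y, H x y * f y := by
      simp [Matrix.mulVec, dotProduct]
    have key := hmax f x hfx
    rw [hmv, ← Finset.add_sum_erase Finset.univ _ (Finset.mem_univ x)] at key
    have hsum : ∑ y ∈ Finset.univ.erase x, H x y * f y
        = -∑ y ∈ Finset.univ.erase x, |H x y| := by
      rw [← Finset.sum_neg_distrib]
      apply Finset.sum_congr rfl
      intro y hy
      have hyx : y ≠ x := Finset.ne_of_mem_erase hy
      rw [hfdef]; simp only [if_neg hyx]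
      exact mul_neg_sign _
    rw [hsum, hfx1, mul_one] at key
    linarith
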